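/- Let G be a subgroup of Aut(Γ), (f_i)_{i∈I} an LK-family, and ψ : B⁺ → End(V) the associated LK-representation. Assume f_i(e_α) = f_{g(i)}(e_{g(α)}) for every (i, α, g) ∈ I × Φ⁺ × G. Then for every (b, v, g) ∈ B⁺ × V × G, g(ψ_b(v)) = ψ_{g(b)}(g(v)); in particular, for every b ∈ (B⁺)^G, ψ_b stabilizes V^G, so ψ induces a monoid homomorphism ψ^G : (B⁺)^G → End(V^G), b ↦ ψ_b|_{V^G}. Moreover, if ψ_b is an automorphism of V for every b ∈ B⁺, then ψ^G_b is an automorphism of V^G for every b ∈ (B⁺)^G. -/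

import Mathlib

set_option maxRecDepth 4000

namespace LK

/-! ### Coxeter matrices -/

/-- A Coxeter matrix on an index set `I` (entry `0` encodes `∞`). -/
structure CoxM (I : Type) where
  m : I → I → ℕ
  symm : ∀ i j, m i j = m j i
  one_iff : ∀ i j, m i j = 1 ↔ i = j

variable {I : Type}

/-- A Coxeter matrix is of small type if all its entries belong to `{1,2,3}`. -/
def CoxM.Small (M : CoxM I) : Prop := ∀ i j, M.m i j = 1 ∨ M.m i j = 2 ∨ M.m i j = 3

/-- The alternating word `i j i j ⋯` with `k` letters. -/
def braidList (k : ℕ) (i j : I) : List I :=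
  (List.range k).map (fun n => if n % 2 = 0 then i else j)

/-- The braid word `s_i s_j s_i ⋯` (`k` letters) in the free monoid. -/
def braidWord (k : ℕ) (i j : I) : FreeMonoid I := FreeMonoid.ofList (braidList k i j)

/-- The braid relations defining the Artin–Tits monoid. -/
def artinRel (M : CoxM I) : FreeMonoid I → FreeMonoid I → Prop :=
  fun x y => ∃ i j, M.m i j ≠ 0 ∧ x = braidWord (M.m i j) i j ∧ y = braidWord (M.m i j) j i

/-- The congruence on the free monoid generated by the braid relations. -/
def artinCon (M : CoxM I) : Con (FreeMonoid I) := conGen (artinRel M)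

/-- The Artin–Tits monoid `B⁺` of a Coxeter matrix. -/
def AM (M : CoxM I) := (artinCon M).Quotient

instance (M : CoxM I) : Monoid (AM M) := inferInstanceAs (Monoid (artinCon M).Quotient)

/-- The standard generators of the Artin–Tits monoid. -/
def gen (M : CoxM I) (i : I) : AM M := (artinCon M).mk' (FreeMonoid.of i)

/-- `I(b) = {i ∈ I ∣ s_i ≼ b}`, where `≼` is left divisibility. -/
def IdxSet (M : CoxM I) (x : AM M) : Set I := {i | gen M i ∣ x}

/-- The braid word `s_i s_j s_i ⋯` (`k` letters) in the free group. -/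
def braidWordG (k : ℕ) (i j : I) : FreeGroup I := ((braidList k i j).map FreeGroup.of).prod

/-- The braid relators defining the Artin–Tits group. -/
def artinGRels (M : CoxM I) : Set (FreeGroup I) :=
  {r | ∃ i j, M.m i j ≠ 0 ∧ r = braidWordG (M.m i j) i j * (braidWordG (M.m i j) j i)⁻¹}

/-- The Artin–Tits group `B` of a Coxeter matrix. -/
def AG (M : CoxM I) := PresentedGroup (artinGRels M)

instance (M : CoxM I) : Group (AG M) := inferInstanceAs (Group (PresentedGroup _))

/-- The standard generators of the Artin–Tits group. -/
def ggen (M : CoxM I) (i : I) : AG M := PresentedGroup.of i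

/-- The relators defining the Coxeter group. -/
def coxRels (M : CoxM I) : Set (FreeGroup I) :=
  {r | ∃ i j, M.m i j ≠ 0 ∧ r = (FreeGroup.of i * FreeGroup.of j) ^ (M.m i j)}

/-- The Coxeter group `W` of a Coxeter matrix. -/
def CoxG (M : CoxM I) := PresentedGroup (coxRels M)

instance (M : CoxM I) : Group (CoxG M) := inferInstanceAs (Group (PresentedGroup _))

/-- A Coxeter matrix is spherical if its Coxeter group is finite. -/
def Spherical (M : CoxM I) : Prop := Finite (CoxG M)

/-- Connectedness of the Coxeter graph: there is an edge between `i` and `j`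
iff `m i j ∉ {1,2}`. -/
def Connected (M : CoxM I) : Prop :=
  ∀ i j : I, Relation.ReflTransGen (fun a b => M.m a b ≠ 1 ∧ M.m a b ≠ 2) i j

/-- Restriction of a Coxeter matrix to a subset of the index set. -/
def CoxM.restrictF [DecidableEq I] (M : CoxM I) (J : Finset I) : CoxM {i // i ∈ J} :=
  ⟨fun i j => M.m i j, fun i j => M.symm i j,
   fun i j => (M.one_iff i j).trans (by exact Subtype.coe_inj)⟩

/-- An irreducible affine Coxeter matrix: connected, non-spherical, but every proper
parabolic submatrix is spherical. -/
def Affine [Fintype I] [DecidableEq I] (M : CoxM I) : Prop :=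
  Connected M ∧ ¬ Spherical M ∧ ∀ J : Finset I, J ≠ Finset.univ → Spherical (M.restrictF J)

/-! ### The standard root system -/

section Roots

variable [Fintype I] [DecidableEq I]

/-- The coefficients `-2 cos (π / m i j)` of the standard bilinear form. -/
noncomputable def cf (M : CoxM I) (i j : I) : ℝ := -2 * Real.cos (Real.pi / (M.m i j : ℝ))

/-- The standard symmetric bilinear form `( · | · )` on `E = ⊕ ℝ α_i`. -/
noncomputable def bform (M : CoxM I) (x y : I → ℝ) : ℝ := ∑ i, ∑ j, x i * y j * cf M i j

/-- The simple root `α_i`. -/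
def sroot (i : I) : I → ℝ := Pi.single i 1

/-- The simple reflection `s_i` acting on `E`. -/
noncomputable def srefl (M : CoxM I) (i : I) (v : I → ℝ) : I → ℝ :=
  v - bform M v (sroot i) • sroot i

/-- The roots: the orbit of the simple roots under the reflections. -/
inductive IsRoot (M : CoxM I) : (I → ℝ) → Prop
  | simple (i : I) : IsRoot M (sroot i)
  | srefl (i : I) (v : I → ℝ) : IsRoot M v → IsRoot M (LK.srefl M i v)

/-- The positive roots: roots with nonnegative coordinates. -/
def IsPos (M : CoxM I) (v : I → ℝ) : Prop := IsRoot M v ∧ ∀ i, 0 ≤ v i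

/-- The set `Φ⁺` of positive roots, as a type. -/
def Pos (M : CoxM I) := {v : I → ℝ // IsPos M v}

/-- The depth of a positive root: the least number of simple reflections needed to
send it to a negative vector. -/
noncomputable def dep (M : CoxM I) (v : I → ℝ) : ℕ :=
  sInf {n | ∃ l : List I, l.length = n ∧ ∃ k, l.foldr (srefl M) v k < 0}

theorem isPos_sroot (M : CoxM I) (i : I) : IsPos M (sroot i) :=
  ⟨IsRoot.simple i, fun j => by rw [sroot, Pi.single_apply]; split <;> norm_num⟩

/-- The simple root `α_i` as a positive root. -/
def simplePos (M : CoxM I) (i : I) : Pos M := ⟨sroot i, isPos_sroot M i⟩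

/-! ### The Lawrence–Krammer representation -/

variable (M : CoxM I) (R : Type) [CommRing R]

/-- The free module `V` with basis `(e_α)` indexed by the positive roots. -/
abbrev VV := Pos M →₀ R

/-- The basis vector `e_α` of `V`. -/
noncomputable def ev (α : Pos M) : VV M R := Finsupp.single α 1

open scoped Classical in
/-- The value of the map `φ_i` on the basis vector indexed by `α`. -/
noncomputable def phiAux (a b c d : R) (i : I) (α : Pos M) : VV M R :=
  if α.1 = sroot i then 0
  else if srefl M i α.1 = α.1 then d • ev M R α
  else if h : IsPos M (srefl M i α.1) then
    if dep M α.1 < dep M (srefl M i α.1) then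
      a • ev M R α + c • ev M R ⟨srefl M i α.1, h⟩
    else b • ev M R ⟨srefl M i α.1, h⟩
  else 0

/-- The linear map `φ_i : V → V`. -/
noncomputable def phi (a b c d : R) (i : I) : VV M R →ₗ[R] VV M R :=
  Finsupp.lift (VV M R) R (Pos M) (phiAux M R a b c d i)

/-- The linear map `ψ_i = φ_i + f_i ⊠ e_{α_i}`. -/
noncomputable def psim (a b c d : R) (f : I → (VV M R →ₗ[R] R)) (i : I) :
    VV M R →ₗ[R] VV M R :=
  phi M R a b c d i + (f i).smulRight (ev M R (simplePos M i))

/-- LK-families. -/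
structure IsLK (a b c d : R) (f : I → (VV M R →ₗ[R] R)) : Prop where
  diag : ∀ i j, i ≠ j → f i (ev M R (simplePos M j)) = 0
  rel2 : ∀ i j, M.m i j = 2 → (f i).comp (phi M R a b c d j) = d • f i
  rel3 : ∀ i j, M.m i j = 3 →
    (f i).comp (phi M R a b c d j) = (f j).comp (phi M R a b c d i)

/-- The `R`-module `𝓕` of LK-families. -/
noncomputable def LKFamilies (a b c d : R) : Submodule R (I → (VV M R →ₗ[R] R)) where
  carrier := {f | IsLK M R a b c d f}
  add_mem' := by
    rintro f g ⟨hf1, hf2, hf3⟩ ⟨hg1, hg2, hg3⟩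
    refine ⟨fun i j hij => ?_, fun i j hij => ?_, fun i j hij => ?_⟩
    · rw [Pi.add_apply, LinearMap.add_apply, hf1 i j hij, hg1 i j hij, add_zero]
    · simp only [Pi.add_apply, LinearMap.add_comp, hf2 i j hij, hg2 i j hij, smul_add]
    · simp only [Pi.add_apply, LinearMap.add_comp, hf3 i j hij, hg3 i j hij]
  zero_mem' := by
    refine ⟨fun i j hij => ?_, fun i j hij => ?_, fun i j hij => ?_⟩
    · rw [Pi.zero_apply, LinearMap.zero_apply]
    · simp only [Pi.zero_apply, LinearMap.zero_comp, smul_zero]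
    · simp only [Pi.zero_apply, LinearMap.zero_comp]
  smul_mem' := by
    rintro r f ⟨h1, h2, h3⟩
    refine ⟨fun i j hij => ?_, fun i j hij => ?_, fun i j hij => ?_⟩
    · rw [Pi.smul_apply, LinearMap.smul_apply, h1 i j hij, smul_zero]
    · rw [Pi.smul_apply, LinearMap.smul_comp, h2 i j hij]; exact smul_comm r d (f i)
    · simp only [Pi.smul_apply, LinearMap.smul_comp, h3 i j hij]

end Roots

/-! ### The monoid of binary relations -/

/-- The monoid of binary relations on a set `Ω`, where `β (R * S) α ↔ ∃ γ, β R γ ∧ γ S α`. -/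
def Bin (Ω : Type) := Ω → Ω → Prop

instance (Ω : Type) : Monoid (Bin Ω) where
  mul T S := fun x z => ∃ y, T x y ∧ S y z
  one := fun x y => x = y
  mul_assoc T S U := by
    funext x z
    apply propext
    constructor
    · rintro ⟨y, ⟨u, hTu, hSu⟩, hU⟩; exact ⟨u, hTu, y, hSu, hU⟩
    · rintro ⟨u, hT, y, hS, hU⟩; exact ⟨y, ⟨u, hT, hS⟩, hU⟩
  one_mul T := by
    funext x z
    apply propext
    constructor
    · rintro ⟨y, rfl, h⟩; exact h
    · intro h; exact ⟨x, rfl, h⟩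
  mul_one T := by
    funext x z
    apply propext
    constructor
    · rintro ⟨y, h, rfl⟩; exact h
    · intro h; exact ⟨z, h, rfl⟩

/-- `R(Ψ) = {β ∈ Ω ∣ ∃ α ∈ Ψ, β R α}`. -/
def Bin.image {Ω : Type} (T : Bin Ω) (Ψ : Set Ω) : Set Ω := {x | ∃ y ∈ Ψ, T x y}

/-! ### Further constructions -/

section More

variable [Fintype I] [DecidableEq I]

/-- The map `μ : 𝓕 → 𝔯` in the spherical case. -/
noncomputable def muSph (M : CoxM I) (R : Type) [CommRing R] (a b c d : R) (i0 : I) :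
    LKFamilies M R a b c d →ₗ[R] R where
  toFun f := f.1 i0 (ev M R (simplePos M i0))
  map_add' f g := rfl
  map_smul' r f := rfl

/-- A graph automorphism of a Coxeter matrix. -/
def IsAut (M : CoxM I) (g : Equiv.Perm I) : Prop := ∀ i j, M.m (g i) (g j) = M.m i j

/-- The action of a permutation of `I` on `E = ⊕ ℝ α_i`, sending `α_i` to `α_{g(i)}`. -/
def permE (g : Equiv.Perm I) (v : I → ℝ) : I → ℝ := fun i => v (g.symm i)

open scoped Classical in
/-- The element of `Φ⁺` with given coordinates (junk value if the vector is not
a positive root). -/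
noncomputable def posOf (M : CoxM I) [Nonempty I] (v : I → ℝ) : Pos M :=
  if h : IsPos M v then ⟨v, h⟩ else simplePos M (Classical.arbitrary I)

/-- The action of a permutation of `I` on `Φ⁺`. -/
noncomputable def permPos (M : CoxM I) [Nonempty I] (g : Equiv.Perm I) (α : Pos M) : Pos M :=
  posOf M (permE g α.1)

/-- The action of a permutation of `I` on `V`, permuting the basis `(e_α)`. -/
noncomputable def permV (M : CoxM I) (R : Type) [CommRing R] [Nonempty I] (g : Equiv.Perm I) :
    VV M R →ₗ[R] VV M R :=
  Finsupp.lmapDomain R R (permPos M g)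

/-- The submodule `V^G` of fixed points of `V` under a group `G` of permutations of `I`. -/
noncomputable def fixedV (M : CoxM I) (R : Type) [CommRing R] [Nonempty I]
    (G : Subgroup (Equiv.Perm I)) : Submodule R (VV M R) where
  carrier := {v | ∀ g ∈ G, permV M R g v = v}
  add_mem' hx hy g hg := by rw [map_add, hx g hg, hy g hg]
  zero_mem' g hg := map_zero _
  smul_mem' r v hv g hg := by rw [map_smul, hv g hg]

/-- The submonoid `(B⁺)^G` of fixed points of the Artin–Tits monoid under a group `G`
of permutations of `I` (acting via `actB`). -/
def fixedB (M : CoxM I) (actB : Equiv.Perm I → (AM M →* AM M))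
    (G : Subgroup (Equiv.Perm I)) : Submonoid (AM M) where
  carrier := {x | ∀ g ∈ G, actB g x = x}
  one_mem' g hg := map_one _
  mul_mem' hx hy g hg := by rw [map_mul, hx g hg, hy g hg]

/-- The map `μ : 𝓕 → 𝔯^ℕ` in the affine case, defined from the data of the imaginary
root `δ` and of a pair `(i0, j0)` with `m i0 j0 = 3`. -/
noncomputable def muAff (M : CoxM I) (R : Type) [CommRing R] [Nonempty I] (b c d : R)
    (δ : I → ℝ) (i0 j0 : I) (f : I → (VV M R →ₗ[R] R)) : ℕ → R := fun n =>
  if n % 2 = 0 then f i0 (ev M R (posOf M ((n / 2 : ℕ) • δ + sroot i0)))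
  else
    c * d * f i0 (ev M R (posOf M (((n + 1) / 2 : ℕ) • δ - sroot i0)))
      - b * c * f i0 (ev M R (posOf M (((n + 1) / 2 : ℕ) • δ - sroot i0 - sroot j0)))
      - d * d * f j0 (ev M R (posOf M (((n + 1) / 2 : ℕ) • δ - sroot i0 - sroot j0)))

end More

end LK

namespace LK

section Aux

variable {I : Type} [Fintype I] [DecidableEq I]

theorem permE_sroot (g : Equiv.Perm I) (i : I) : permE g (sroot i) = sroot (g i) := by
  funext k
  simp only [permE, sroot, Pi.single_apply]
  by_cases h : g.symm k = i
  · rw [if_pos h, if_pos (by rw [← h, Equiv.apply_symm_apply])]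
  · rw [if_neg h, if_neg (fun hh => h (by rw [hh, Equiv.symm_apply_apply]))]

theorem permE_inv (g : Equiv.Perm I) (v : I → ℝ) : permE g⁻¹ (permE g v) = v := by
  funext i
  show v (g.symm ((g⁻¹).symm i)) = v i
  congr 1
  show g.symm (g i) = i
  exact g.symm_apply_apply i

theorem permE_injective (g : Equiv.Perm I) : Function.Injective (permE (I := I) g) := by
  intro v w h
  have := congrArg (permE g⁻¹) h
  rwa [permE_inv, permE_inv] at this

theorem isAut_inv (M : CoxM I) {g : Equiv.Perm I} (hg : IsAut M g) : IsAut M g⁻¹ := by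
  intro i j
  have := hg (g⁻¹ i) (g⁻¹ j)
  simpa using this.symm

theorem bform_permE (M : CoxM I) {g : Equiv.Perm I} (hg : IsAut M g) (x y : I → ℝ) :
    bform M (permE g x) (permE g y) = bform M x y := by
  refine (Fintype.sum_equiv g _ _ fun i => Fintype.sum_equiv g _ _ fun j => ?_).symm
  simp [permE, cf, hg i j]

theorem srefl_permE (M : CoxM I) {g : Equiv.Perm I} (hg : IsAut M g) (i : I) (v : I → ℝ) :
    srefl M (g i) (permE g v) = permE g (srefl M i v) := by
  unfold srefl
  rw [← permE_sroot, bform_permE M hg]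
  funext k
  simp [permE]

theorem isRoot_permE (M : CoxM I) {g : Equiv.Perm I} (hg : IsAut M g) {v : I → ℝ}
    (h : IsRoot M v) : IsRoot M (permE g v) := by
  induction h with
  | simple i => rw [permE_sroot]; exact .simple _
  | srefl i v _ ih => rw [← srefl_permE M hg]; exact .srefl _ _ ih

theorem isPos_permE (M : CoxM I) {g : Equiv.Perm I} (hg : IsAut M g) {v : I → ℝ}
    (h : IsPos M v) : IsPos M (permE g v) :=
  ⟨isRoot_permE M hg h.1, fun i => h.2 (g.symm i)⟩

theorem isPos_permE_iff (M : CoxM I) {g : Equiv.Perm I} (hg : IsAut M g) (v : I → ℝ) :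
    IsPos M (permE g v) ↔ IsPos M v := by
  constructor
  · intro h
    have := isPos_permE M (isAut_inv M hg) h
    rwa [permE_inv] at this
  · exact isPos_permE M hg

theorem foldr_srefl_map (M : CoxM I) {g : Equiv.Perm I} (hg : IsAut M g) (l : List I)
    (v : I → ℝ) : (l.map g).foldr (srefl M) (permE g v) = permE g (l.foldr (srefl M) v) := by
  induction l with
  | nil => rfl
  | cons a l ih => simp only [List.map_cons, List.foldr_cons, ih, srefl_permE M hg]

theorem dep_permE (M : CoxM I) {g : Equiv.Perm I} (hg : IsAut M g) (v : I → ℝ) :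
    dep M (permE g v) = dep M v := by
  unfold dep
  congr 1
  ext n
  constructor
  · rintro ⟨l, hl, k, hk⟩
    refine ⟨l.map g.symm, by simp [hl], g.symm k, ?_⟩
    have hll : l = (l.map ⇑g.symm).map g := by
      rw [List.map_map]
      simp
    rw [hll, foldr_srefl_map M hg] at hk
    exact hk
  · rintro ⟨l, hl, k, hk⟩
    refine ⟨l.map g, by simp [hl], g k, ?_⟩
    rw [foldr_srefl_map M hg]
    simpa [permE] using hk

variable [Nonempty I]

theorem permPos_coe (M : CoxM I) {g : Equiv.Perm I} (hg : IsAut M g) (α : Pos M) :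
    (permPos M g α).1 = permE g α.1 := by
  rw [permPos, posOf]
  exact congrArg (fun x : Pos M => x.1) (dif_pos (isPos_permE M hg α.2))

theorem permPos_simplePos (M : CoxM I) {g : Equiv.Perm I} (hg : IsAut M g) (i : I) :
    permPos M g (simplePos M i) = simplePos M (g i) := by
  apply Subtype.ext
  rw [permPos_coe M hg]
  exact permE_sroot g i

variable (R : Type) [CommRing R]

theorem permV_ev (M : CoxM I) (g : Equiv.Perm I) (α : Pos M) :
    permV M R g (ev M R α) = ev M R (permPos M g α) := by
  rw [permV, ev, Finsupp.lmapDomain_apply, Finsupp.mapDomain_single, ev]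

theorem phi_ev (M : CoxM I) (a b c d : R) (i : I) (α : Pos M) :
    phi M R a b c d i (ev M R α) = phiAux M R a b c d i α := by
  rw [phi, ev, Finsupp.lift_apply, Finsupp.sum_single_index (by rw [zero_smul]), one_smul]

theorem permV_phiAux (M : CoxM I) (a b c d : R) {g : Equiv.Perm I} (hg : IsAut M g)
    (i : I) (α : Pos M) :
    permV M R g (phiAux M R a b c d i α) = phiAux M R a b c d (g i) (permPos M g α) := by
  have hcoe : (permPos M g α).1 = permE g α.1 := permPos_coe M hg α
  by_cases h1 : α.1 = sroot i
  · rw [phiAux, if_pos h1, map_zero, phiAux, if_pos (by rw [hcoe, h1, permE_sroot])]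
  · have h1' : ¬ (permPos M g α).1 = sroot (g i) := by
      rw [hcoe, ← permE_sroot]
      exact fun h => h1 (permE_injective g h)
    by_cases h2 : srefl M i α.1 = α.1
    · rw [phiAux, if_neg h1, if_pos h2, map_smul, permV_ev, phiAux, if_neg h1',
        if_pos (by rw [hcoe, srefl_permE M hg, h2])]
    · have h2' : ¬ srefl M (g i) (permPos M g α).1 = (permPos M g α).1 := by
        rw [hcoe, srefl_permE M hg]
        exact fun h => h2 (permE_injective g h)
      by_cases h3 : IsPos M (srefl M i α.1)
      · have h3' : IsPos M (srefl M (g i) (permPos M g α).1) := by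
          rw [hcoe, srefl_permE M hg]
          exact isPos_permE M hg h3
        have hsub : permPos M g ⟨srefl M i α.1, h3⟩
            = ⟨srefl M (g i) (permPos M g α).1, h3'⟩ := by
          apply Subtype.ext
          rw [permPos_coe M hg ⟨srefl M i α.1, h3⟩]
          show permE g (srefl M i α.1) = srefl M (g i) (permPos M g α).1
          rw [hcoe, srefl_permE M hg]
        by_cases h4 : dep M α.1 < dep M (srefl M i α.1)
        · have h4' : dep M (permPos M g α).1
              < dep M (srefl M (g i) (permPos M g α).1) := by
            rw [hcoe, srefl_permE M hg, dep_permE M hg, dep_permE M hg]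
            exact h4
          rw [phiAux, if_neg h1, if_neg h2, dif_pos h3, if_pos h4, map_add, map_smul,
            map_smul, permV_ev, permV_ev R M g (⟨srefl M i α.1, h3⟩ : Pos M), hsub, phiAux, if_neg h1', if_neg h2',
            dif_pos h3', if_pos h4']
        · have h4' : ¬ dep M (permPos M g α).1
              < dep M (srefl M (g i) (permPos M g α).1) := by
            rw [hcoe, srefl_permE M hg, dep_permE M hg, dep_permE M hg]
            exact h4
          rw [phiAux, if_neg h1, if_neg h2, dif_pos h3, if_neg h4, map_smul,
            permV_ev R M g (⟨srefl M i α.1, h3⟩ : Pos M), hsub, phiAux, if_neg h1', if_neg h2', dif_pos h3', if_neg h4']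
      · have h3' : ¬ IsPos M (srefl M (g i) (permPos M g α).1) := by
          rw [hcoe, srefl_permE M hg, isPos_permE_iff M hg]
          exact h3
        rw [phiAux, if_neg h1, if_neg h2, dif_neg h3, map_zero, phiAux, if_neg h1',
          if_neg h2', dif_neg h3']

theorem permV_psim (M : CoxM I) (a b c d : R) (f : I → (VV M R →ₗ[R] R))
    {g : Equiv.Perm I} (hg : IsAut M g)
    (hsym : ∀ (i : I) (α : Pos M), f i (ev M R α) = f (g i) (ev M R (permPos M g α)))
    (i : I) :
    (permV M R g) * (psim M R a b c d f i) = (psim M R a b c d f (g i)) * (permV M R g) := by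
  apply Finsupp.lhom_ext
  intro α r
  have hr : (Finsupp.single α r : VV M R) = r • ev M R α := by
    rw [ev, Finsupp.smul_single, smul_eq_mul, mul_one]
  have key : permV M R g (psim M R a b c d f i (ev M R α))
      = psim M R a b c d f (g i) (permV M R g (ev M R α)) := by
    rw [permV_ev, psim, psim, LinearMap.add_apply, LinearMap.add_apply, map_add,
      phi_ev, phi_ev, permV_phiAux R M a b c d hg, LinearMap.smulRight_apply,
      LinearMap.smulRight_apply, map_smul, permV_ev, permPos_simplePos M hg,
      hsym i α]
  rw [Module.End.mul_apply, Module.End.mul_apply, hr, map_smul, map_smul, key, ← map_smul, ← map_smul]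

end Aux

end LK

open LK in
/-- equivariance of an LK-representation with `G`-symmetric LK-family, the
induced twisted LK-representation, and invertibility of its images. -/
theorem statement_18 {I : Type} [Fintype I] [DecidableEq I] [Nonempty I] (M : CoxM I)
    (hsmall : M.Small)
    (R : Type) [CommRing R] (b c d : R) (hb : IsUnit b) (hc : IsUnit c) (hd : IsUnit d)
    (a : R) (ha : a = d - b * c * Ring.inverse d)
    (G : Subgroup (Equiv.Perm I)) (hG : ∀ g ∈ G, IsAut M g)
    (f : I → (VV M R →ₗ[R] R)) (hf : IsLK M R a b c d f)
    (hsym : ∀ g ∈ G, ∀ (i : I) (α : Pos M),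
      f i (ev M R α) = f (g i) (ev M R (permPos M g α)))
    (psirep : AM M →* Module.End R (VV M R))
    (hpsi : ∀ i : I, psirep (gen M i) = psim M R a b c d f i)
    (actB : Equiv.Perm I → (AM M →* AM M))
    (hactB : ∀ g ∈ G, ∀ i : I, actB g (gen M i) = gen M (g i)) :
    (∀ (x : AM M) (v : VV M R), ∀ g ∈ G,
      permV M R g (psirep x v) = psirep (actB g x) (permV M R g v)) ∧
    (∀ x ∈ fixedB M actB G, ∀ v ∈ fixedV M R G, psirep x v ∈ fixedV M R G) ∧
    ∃ psiG : fixedB M actB G →* Module.End R (fixedV M R G),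
      (∀ (x : fixedB M actB G) (v : fixedV M R G),
        (psiG x v : VV M R) = psirep x.1 v.1) ∧
      ((∀ x : AM M, IsUnit (psirep x)) → ∀ y : fixedB M actB G, IsUnit (psiG y)) := by
  -- map-level equivariance
  have key : ∀ g ∈ G, ∀ x : AM M,
      (permV M R g) * psirep x = psirep (actB g x) * (permV M R g) := by
    intro g hgG x
    have hg := hG g hgG
    obtain ⟨w, rfl⟩ := Con.mk'_surjective (c := artinCon M) x
    induction w using FreeMonoid.recOn with
    | one =>
        change permV M R g * psirep (1 : AM M) = psirep ((actB g) (1 : AM M)) * permV M R g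
        simp only [map_one, one_mul, mul_one]
    | of_mul i w ihw =>
        have hpsi' : psirep ((artinCon M).mk' (FreeMonoid.of i))
            = psim M R a b c d f i := hpsi i
        have hpsi'' : psirep ((artinCon M).mk' (FreeMonoid.of (g i)))
            = psim M R a b c d f (g i) := hpsi (g i)
        have hact' : actB g ((artinCon M).mk' (FreeMonoid.of i))
            = (artinCon M).mk' (FreeMonoid.of (g i)) := hactB g hgG i
        erw [map_mul (artinCon M).mk' (FreeMonoid.of i) w, map_mul psirep,
          map_mul (actB g), map_mul psirep, ← mul_assoc, hpsi',
          permV_psim R M a b c d f hg (fun j α => hsym g hgG j α) i,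
          mul_assoc, ihw, ← mul_assoc, hact', hpsi'']
  have key' : ∀ g ∈ G, ∀ (x : AM M) (v : VV M R),
      permV M R g (psirep x v) = psirep (actB g x) (permV M R g v) := by
    intro g hgG x v
    have := congrArg (fun T : Module.End R (VV M R) => T v) (key g hgG x)
    simpa [Module.End.mul_apply] using this
  refine ⟨fun x v g hgG => key' g hgG x v, ?_, ?_⟩
  · intro x hx v hv g hgG
    rw [key' g hgG x v, hx g hgG, hv g hgG]
  · have stab : ∀ x ∈ fixedB M actB G, ∀ v ∈ fixedV M R G,
        psirep x v ∈ fixedV M R G := by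
      intro x hx v hv g hgG
      rw [key' g hgG x v, hx g hgG, hv g hgG]
    refine ⟨{ toFun := fun x => (psirep x.1).restrict (fun v hv => stab x.1 x.2 v hv),
              map_one' := ?_, map_mul' := ?_ }, ?_, ?_⟩
    · apply LinearMap.ext
      intro v
      apply Subtype.ext
      rw [LinearMap.restrict_apply]
      show (psirep 1) v.1 = v.1
      rw [map_one]
      rfl
    · intro x y
      apply LinearMap.ext
      intro v
      apply Subtype.ext
      rw [LinearMap.restrict_apply]
      show (psirep (x.1 * y.1)) v.1 = _
      rw [map_mul, Module.End.mul_apply]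
      rw [Module.End.mul_apply, LinearMap.restrict_apply, LinearMap.restrict_apply]
    · intro x v
      rfl
    · intro hinv y
      have hy := hinv y.1
      set u : Module.End R (VV M R) := ↑hy.unit⁻¹ with hu
      have hui : psirep y.1 * u = 1 := by rw [hu]; exact hy.unit.mul_inv
      have hiu : u * psirep y.1 = 1 := by rw [hu]; exact hy.unit.inv_mul
      have hcomm : ∀ g ∈ G, permV M R g * psirep y.1 = psirep y.1 * permV M R g := by
        intro g hgG
        have := key g hgG y.1
        rwa [y.2 g hgG] at this
      have hcommu : ∀ g ∈ G, permV M R g * u = u * permV M R g := by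
        intro g hgG
        calc permV M R g * u = u * (psirep y.1 * (permV M R g * u)) := by
              rw [← mul_assoc, ← mul_assoc, hiu, one_mul]
          _ = u * permV M R g * (psirep y.1 * u) := by
              simp only [← mul_assoc]
              rw [mul_assoc u, ← hcomm g hgG, ← mul_assoc]
          _ = u * permV M R g := by rw [hui, mul_one]
      have hustab : ∀ v ∈ fixedV M R G, u v ∈ fixedV M R G := by
        intro v hv g hgG
        have := congrArg (fun T : Module.End R (VV M R) => T v) (hcommu g hgG)
        simp only [Module.End.mul_apply] at this
        rw [this, hv g hgG]
      refine isUnit_iff_exists.2 ⟨u.restrict hustab, ?_, ?_⟩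
      · apply LinearMap.ext
        intro v
        apply Subtype.ext
        show (psirep y.1) (u v.1) = v.1
        have := congrArg (fun T : Module.End R (VV M R) => T v.1) hui
        simpa [Module.End.mul_apply] using this
      · apply LinearMap.ext
        intro v
        apply Subtype.ext
        show u ((psirep y.1) v.1) = v.1
        have := congrArg (fun T : Module.End R (VV M R) => T v.1) hiu
        simpa [Module.End.mul_apply] using this
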